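/- Let · be a partial action of H on R, let g ∈ H be a grouplike element with g² = 1 and let x ∈ H be a (1,g)-primitive element with x² = 0 and xg = −gx. If g·1_R = 0, then (x·1_R)² ∈ Z(R). -/

import Mathlib

open TensorProduct

noncomputable section

/-- Gaussian ($q$-)binomial coefficients, defined by the recursion
`binom(0,0)_q = 1`, `binom(n,m)_q = 0` for `m > n`,
`binom(n,m)_q = binom(n-1,m)_q + q^(n-m) * binom(n-1,m-1)_q`. -/
def qbinom {K : Type*} [CommRing K] (q : K) : ℕ → ℕ → K
  | 0, 0 => 1
  | 0, _ + 1 => 0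
  | n + 1, 0 => qbinom q n 0
  | n + 1, m + 1 => qbinom q n (m + 1) + q ^ (n - m) * qbinom q n m

/-- A (left) partial action of a bialgebra `H` on an algebra `R`:
(PA.1) `1 · r = r`; (PA.2) `h · (r*s) = Σ (h₁ · r)(h₂ · s)`;
(PA.3) `h · (m · r) = Σ (h₁ · 1)(h₂m · r)`. -/
structure PartialAction (k H R : Type*) [CommSemiring k] [Semiring H] [Bialgebra k H]
    [Semiring R] [Algebra k R] where
  act : H →ₗ[k] R →ₗ[k] R
  unit_act : ∀ r : R, act 1 r = r
  mul_act : ∀ (h : H) (r s : R),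
    act h (r * s) = TensorProduct.lift
      ((LinearMap.mul k R).compl₁₂ (act.flip r) (act.flip s)) (Coalgebra.comul (R := k) h)
  act_act : ∀ (h m : H) (r : R),
    act h (act m r) = TensorProduct.lift
      ((LinearMap.mul k R).compl₁₂ (act.flip 1)
        ((act.flip r).comp (LinearMap.mulRight k m))) (Coalgebra.comul (R := k) h)

/-- Symmetry (PA.S): `h · (m · r) = Σ (h₁m · r)(h₂ · 1)`. -/
def PartialAction.IsSymmetric {k H R : Type*} [CommSemiring k] [Semiring H] [Bialgebra k H]
    [Semiring R] [Algebra k R] (P : PartialAction k H R) : Prop :=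
  ∀ (h m : H) (r : R),
    P.act h (P.act m r) = TensorProduct.lift
      ((LinearMap.mul k R).compl₁₂ ((P.act.flip r).comp (LinearMap.mulRight k m))
        (P.act.flip 1)) (Coalgebra.comul (R := k) h)

/-- A grouplike element: `Δ g = g ⊗ g` and `ε g = 1`. -/
def IsGrouplike (k : Type*) {H : Type*} [CommSemiring k] [Semiring H] [Bialgebra k H]
    (g : H) : Prop :=
  Coalgebra.comul (R := k) g = g ⊗ₜ[k] g ∧ Coalgebra.counit (R := k) g = 1

/-- A `(1,g)`-primitive element: `Δ x = x ⊗ 1 + g ⊗ x`. -/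
def IsOneGPrimitive (k : Type*) {H : Type*} [CommSemiring k] [Semiring H] [Bialgebra k H]
    (g x : H) : Prop :=
  Coalgebra.comul (R := k) x = x ⊗ₜ[k] (1 : H) + g ⊗ₜ[k] x

end

/-- Lemma 2.4(ii): if `g² = 1`, `x² = 0`, `xg = -gx` and `g · 1_R = 0`,
then `(x · 1_R)² ∈ Z(R)`. -/
theorem stmt2 {k H R : Type*} [Field k] [IsAlgClosed k] [CharZero k]
    [Ring H] [HopfAlgebra k H] [Ring R] [Algebra k R]
    (P : PartialAction k H R) (g x : H)
    (hg : IsGrouplike k g) (hx : IsOneGPrimitive k g x)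
    (hg2 : g ^ 2 = 1) (hx2 : x ^ 2 = 0) (hxg : x * g = -(g * x))
    (hg0 : P.act g 1 = 0) :
    (P.act x 1) ^ 2 ∈ Set.center R := by
  have hgg : g * g = 1 := by rw [← pow_two]; exact hg2
  have hxx : x * x = 0 := by rw [← pow_two]; exact hx2
  have hgxg : (g * x) * g = -x := by
    rw [mul_assoc, hxg, mul_neg, ← mul_assoc, hgg, one_mul]
  have hggx : g * (g * x) = x := by rw [← mul_assoc, hgg, one_mul]
  have hxgx : x * (g * x) = 0 := by
    rw [← mul_assoc, hxg, neg_mul, mul_assoc, hxx, mul_zero, neg_zero]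
  have hgxgx : (g * x) * (g * x) = 0 := by
    rw [mul_assoc, hxgx, mul_zero]
  replace hx : Coalgebra.comul (R := k) x = x ⊗ₜ[k] (1:H) + g ⊗ₜ[k] x := hx
  set a := P.act x 1 with ha
  -- comul of g*x
  have hΔgx : Coalgebra.comul (R := k) (g * x)
      = (g * x) ⊗ₜ[k] g + (1 : H) ⊗ₜ[k] (g * x) := by
    rw [Bialgebra.comul_mul, hg.1, hx, mul_add, Algebra.TensorProduct.tmul_mul_tmul,
      Algebra.TensorProduct.tmul_mul_tmul, mul_one, hgg]
  -- g acts as zero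
  have hgr : ∀ r : R, P.act g r = 0 := by
    intro r
    have h := P.act_act g 1 r
    rw [P.unit_act r, hg.1] at h
    simpa [hg0] using h
  -- x acts as left multiplication by a
  have hxr : ∀ r : R, P.act x r = a * r := by
    intro r
    have h := P.act_act x 1 r
    rw [P.unit_act r, hx] at h
    simpa [hg0, P.unit_act, ha] using h
  -- gx · 1 = a
  have hgx1 : P.act (g * x) 1 = a := by
    have h := P.act_act (g * x) g 1
    rw [hg0, hΔgx] at h
    simp only [map_zero, map_add, TensorProduct.lift.tmul, LinearMap.compl₁₂_apply,
      LinearMap.flip_apply, LinearMap.comp_apply, LinearMap.mulRight_apply,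
      LinearMap.mul_apply', hgg, hgxg, P.unit_act, map_neg, LinearMap.neg_apply] at h
    replace h := h.symm
    rwa [mul_one, one_mul, ← sub_eq_add_neg, sub_eq_zero] at h
  -- gx · r = r * a
  have hgxr : ∀ r : R, P.act (g * x) r = r * a := by
    intro r
    have h := P.act (g * x) |>.congr_arg (mul_one r)
    have h2 := P.mul_act (g * x) r 1
    rw [hΔgx] at h2
    simp only [map_add, TensorProduct.lift.tmul, LinearMap.compl₁₂_apply,
      LinearMap.flip_apply, LinearMap.mul_apply', hgr, hgx1, P.unit_act, mul_zero,
      zero_add, mul_one] at h2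
    simpa using h2
  -- final computation
  have key : ∀ r : R, r * (a * a) = a * (a * r) := by
    intro r
    have h := P.act_act (g * x) (g * x) r
    rw [hgxr r, hgxr (r * a), hΔgx] at h
    simp only [map_add, TensorProduct.lift.tmul, LinearMap.compl₁₂_apply,
      LinearMap.flip_apply, LinearMap.comp_apply, LinearMap.mulRight_apply,
      LinearMap.mul_apply', hggx, hgxgx, hgx1, hxr, LinearMap.zero_apply, map_zero,
      mul_zero, add_zero, P.unit_act, mul_assoc] at h
    exact h
  rw [Set.mem_center_iff]
  constructor
  · intro r
    rw [pow_two]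
    show a * a * r = r * (a * a)
    rw [key r, mul_assoc]
  all_goals intro b c; rw [mul_assoc]
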